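/- Let Δ be a digraph on n vertices with Hermitian adjacency matrix H = H_ω(Δ) for ω = (−1 ± i√3)/2, and let λ ∉ {0,−1} be a non-main eigenvalue of H of multiplicity n − d. Then n ≤ d(d+5)/2. -/

import Mathlib

open Matrix

/-- The Hermitian adjacency matrix `H_ω` of a digraph with arc relation `E`:
entry `1` on digons, `ω` on forward-only arcs, `conj ω` on backward-only arcs, `0` otherwise. -/
noncomputable def hermAdj (n : ℕ) (E : Fin n → Fin n → Prop) [DecidableRel E] (ω : ℂ) :
    Matrix (Fin n) (Fin n) ℂ :=
  Matrix.of fun x y =>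
    if E x y ∧ E y x then 1 else if E x y then ω else if E y x then starRingEnd ℂ ω else 0

private lemma omega_sq (ω : ℂ)
    (hω : ω = (-1 + Complex.I * Real.sqrt 3) / 2 ∨ ω = (-1 - Complex.I * Real.sqrt 3) / 2) :
    ω ^ 2 = starRingEnd ℂ ω := by
  have h3 : ((Real.sqrt 3 : ℝ) : ℂ) ^ 2 = 3 := by
    rw [← Complex.ofReal_pow, Real.sq_sqrt (by norm_num : (3:ℝ) ≥ 0)]
    norm_num
  rcases hω with rfl | rfl <;>
  · simp only [map_div₀, map_add, map_sub, _root_.map_mul, map_neg, _root_.map_one, map_ofNat,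
      Complex.conj_I, Complex.conj_ofReal]
    linear_combination (-(1:ℂ)/4) * h3 + (((Real.sqrt 3 : ℝ) : ℂ)^2/4) * Complex.I_sq

private lemma rank_sub_le' {m : ℕ} (A B : Matrix (Fin m) (Fin m) ℂ) :
    (A - B).rank ≤ A.rank + B.rank := by
  have hr : LinearMap.range (A - B).mulVecLin ≤
      LinearMap.range A.mulVecLin ⊔ LinearMap.range B.mulVecLin := by
    rintro _ ⟨v, rfl⟩
    refine Submodule.mem_sup.2 ⟨A *ᵥ v, ⟨v, rfl⟩, -(B *ᵥ v), neg_mem ⟨v, rfl⟩, ?_⟩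
    simp [Matrix.mulVecLin_apply, Matrix.sub_mulVec, Matrix.neg_mulVec, sub_eq_add_neg]
  refine le_trans (Submodule.finrank_mono hr) ?_
  exact Submodule.finrank_add_le_finrank_add_finrank _ _

private lemma sum_sym_pairs {m : ℕ} (f : Fin m → Fin m → ℂ) (hf : ∀ k l, f k l = f l k) :
    ∑ k, ∑ l, f k l =
      ∑ t : {p : Fin m × Fin m // p.1 ≤ p.2},
        (if t.1.1 = t.1.2 then 1 else 2) * f t.1.1 t.1.2 := by
  classical
  have hfe : Finset.univ.filter (fun p : Fin m × Fin m => p.1 < p.2)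
      = (Finset.univ.filter (fun p : Fin m × Fin m => p.1 ≤ p.2)).filter
        (fun p => ¬ p.1 = p.2) := by
    rw [Finset.filter_filter]
    apply Finset.filter_congr
    intro p _
    simp [lt_iff_le_and_ne]
  rw [← Finset.sum_product', ← Finset.subtype_univ, Finset.sum_subtype_eq_sum_filter
      (fun p : Fin m × Fin m => (if p.1 = p.2 then (1:ℂ) else 2) * f p.1 p.2),
    Finset.univ_product_univ,
    ← Finset.sum_filter_add_sum_filter_not Finset.univ (fun p : Fin m × Fin m => p.1 ≤ p.2)
      (fun p => f p.1 p.2)]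
  have hswap : ∑ p ∈ Finset.univ.filter (fun p : Fin m × Fin m => ¬ p.1 ≤ p.2), f p.1 p.2
      = ∑ p ∈ Finset.univ.filter (fun p : Fin m × Fin m => p.1 < p.2), f p.1 p.2 := by
    refine Finset.sum_nbij' (fun p => Prod.swap p) (fun p => Prod.swap p) ?_ ?_ ?_ ?_ ?_
    · intro a ha; simp at ha ⊢; omega
    · intro a ha; simp at ha ⊢; omega
    · intro a _; simp
    · intro a _; simp
    · intro a _; exact hf a.1 a.2
  rw [hswap, hfe,
    Finset.sum_filter (fun p : Fin m × Fin m => ¬ p.1 = p.2) (fun p => f p.1 p.2),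
    ← Finset.sum_add_distrib]
  apply Finset.sum_congr rfl
  intro p _
  by_cases h : p.1 = p.2 <;> simp [h] <;> ring

private lemma dot_sum_smul {n d : ℕ} (v : Fin n → ℂ) (c : Fin d → ℂ) (w : Fin d → Fin n → ℂ) :
    v ⬝ᵥ (∑ k, c k • w k) = ∑ k, c k * (v ⬝ᵥ w k) := by
  simp only [dotProduct, Finset.sum_apply, Pi.smul_apply, smul_eq_mul, Finset.mul_sum]
  rw [Finset.sum_comm]
  exact Finset.sum_congr rfl fun k _ => Finset.sum_congr rfl fun i _ => by ring

/-- For a digraph on `n` vertices with Hermitian adjacency matrix `H_ω`,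
`ω = (−1 ± i√3)/2`, and `λ ∉ {0,−1}` a non-main eigenvalue of multiplicity `n − d`,
one has `n ≤ d(d+5)/2`. -/
theorem stmt_18 (n d : ℕ) (E : Fin n → Fin n → Prop) [DecidableRel E]
    (hirr : ∀ x, ¬ E x x) (ω : ℂ)
    (hω : ω = (-1 + Complex.I * Real.sqrt 3) / 2 ∨ ω = (-1 - Complex.I * Real.sqrt 3) / 2)
    (lam : ℝ) (h0 : lam ≠ 0) (h1 : lam ≠ -1)
    (heig : Module.End.HasEigenvalue (Matrix.toLin' (hermAdj n E ω)) (lam : ℂ))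
    (hnonmain : ∀ v ∈ Module.End.eigenspace (Matrix.toLin' (hermAdj n E ω)) (lam : ℂ),
      ∑ i, v i = 0)
    (hdn : d ≤ n)
    (hmult : Module.finrank ℂ
      (Module.End.eigenspace (Matrix.toLin' (hermAdj n E ω)) (lam : ℂ)) = n - d) :
    n ≤ d * (d + 5) / 2 := by
  classical
  set H : Matrix (Fin n) (Fin n) ℂ := hermAdj n E ω with hH
  set V : Submodule ℂ (Fin n → ℂ) :=
    Module.End.eigenspace (Matrix.toLin' H) (lam : ℂ) with hV
  -- Hermitian symmetry of entries
  have hherm : ∀ x y, H y x = starRingEnd ℂ (H x y) := by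
    intro x y
    by_cases hxy : E x y <;> by_cases hyx : E y x <;>
      simp [hH, hermAdj, hxy, hyx]
  have hω2 : ω ^ 2 = starRingEnd ℂ ω := omega_sq ω hω
  have hconj2 : (starRingEnd ℂ ω) ^ 2 = ω := by
    rw [← map_pow, hω2, Complex.conj_conj]
  have hsq : ∀ x y, (H x y) ^ 2 = H y x := by
    intro x y
    rw [hherm x y]
    by_cases hxy : E x y <;> by_cases hyx : E y x <;>
      simp [hH, hermAdj, hxy, hyx, hω2, hconj2]
  -- complement of the eigenspace
  obtain ⟨S, hS⟩ := Submodule.exists_isCompl V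
  have hVS := Submodule.finrank_add_eq_of_isCompl hS
  have hfr : Module.finrank ℂ (Fin n → ℂ) = n := by
    simp [Module.finrank_pi]
  have hfinS : Module.finrank ℂ S = d := by
    rw [hmult, hfr] at hVS
    omega
  let b : Module.Basis (Fin d) ℂ S := Module.finBasisOfFinrankEq ℂ S hfinS
  -- decomposition of basis vectors
  have hdec : ∀ x : Fin n, ∃ pu : (Fin n → ℂ) × (Fin n → ℂ),
      pu.1 ∈ V ∧ pu.2 ∈ S ∧ pu.1 + pu.2 = Pi.single x 1 := by
    intro x
    have hx : (Pi.single x 1 : Fin n → ℂ) ∈ V ⊔ S := by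
      rw [hS.sup_eq_top]; trivial
    obtain ⟨p, hp, u, hu, h⟩ := Submodule.mem_sup.1 hx
    exact ⟨(p, u), hp, hu, h⟩
  choose pu hpV hpS hpsum using hdec
  set p : Fin n → (Fin n → ℂ) := fun x => (pu x).1 with hp
  set u : Fin n → (Fin n → ℂ) := fun x => (pu x).2 with hu
  set N : Matrix (Fin n) (Fin n) ℂ := H - (lam : ℂ) • 1 with hN
  have hNv : ∀ v ∈ V, N *ᵥ v = 0 := by
    intro v hv
    have hv' : H *ᵥ v = (lam : ℂ) • v := by
      have := Module.End.mem_eigenspace_iff.1 hv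
      rwa [Matrix.toLin'_apply] at this
    simp [hN, Matrix.sub_mulVec, Matrix.smul_mulVec, Matrix.one_mulVec, hv']
  have hHh : Hᴴ = H := by
    ext i j
    rw [Matrix.conjTranspose_apply]
    exact (hherm j i).symm
  have hNherm : Nᴴ = N := by
    rw [hN, Matrix.conjTranspose_sub, hHh, Matrix.conjTranspose_smul,
      Matrix.conjTranspose_one]
    congr 1
    simp [Complex.conj_ofReal]
  have hrow : ∀ v ∈ V, star v ᵥ* N = 0 := by
    intro v hv
    have h' : star (N *ᵥ v) = star v ᵥ* N := by
      rw [Matrix.star_mulVec, hNherm]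
    rw [← h', hNv v hv, star_zero]
  set M : Matrix (Fin n) (Fin n) ℂ :=
    Matrix.of (fun x y => star (u x) ⬝ᵥ (N *ᵥ u y)) with hM
  have hstar_single : ∀ x : Fin n, star (Pi.single x (1:ℂ)) = (Pi.single x 1 : Fin n → ℂ) := by
    intro x; ext i
    simp [Pi.single_apply, apply_ite (star : ℂ → ℂ)]
  have husub : ∀ x, u x = Pi.single x 1 - p x := by
    intro x
    rw [← hpsum x, add_sub_cancel_left]
  have hMN : ∀ x y, M x y = N x y := by
    intro x y
    show star (u x) ⬝ᵥ (N *ᵥ u y) = N x y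
    rw [husub y, Matrix.mulVec_sub, hNv (p y) (hpV y), sub_zero,
      husub x, star_sub, sub_dotProduct, hstar_single,
      single_dotProduct, Matrix.dotProduct_mulVec, hrow (p x) (hpV x),
      zero_dotProduct, sub_zero]
    simp [Matrix.mulVec_single]
  have hHdiag : ∀ x, H x x = 0 := by
    intro x; simp [hH, hermAdj, hirr x]
  have hMdiag : ∀ x, M x x = -(lam : ℂ) := by
    intro x
    rw [hMN, hN]
    simp [hHdiag x, Matrix.one_apply]
  have hMsq : ∀ x y, (M x y) ^ 2
      = ((lam:ℂ)^2 + lam) * (if x = y then 1 else 0) + M y x := by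
    intro x y
    by_cases h : x = y
    · subst h
      rw [hMdiag, if_pos rfl]
      ring
    · have hxy : M x y = H x y := by
        rw [hMN, hN]; simp [Matrix.one_apply_ne h]
      have hyx : M y x = H y x := by
        rw [hMN, hN]; simp [Matrix.one_apply_ne (Ne.symm h)]
      rw [hxy, hyx, if_neg h, mul_zero, zero_add]
      exact hsq x y
  -- factorization
  set A : Matrix (Fin d) (Fin n) ℂ :=
    Matrix.of (fun k y => b.repr ⟨u y, hpS y⟩ k) with hA
  set L : Matrix (Fin n) (Fin d) ℂ :=
    Matrix.of (fun x k => star (u x) ⬝ᵥ (N *ᵥ (b k : Fin n → ℂ))) with hL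
  have husum : ∀ y, u y = ∑ k, A k y • ((b k : Fin n → ℂ)) := by
    intro y
    have h' := b.sum_repr ⟨u y, hpS y⟩
    have h'' := congrArg (Subtype.val : S → (Fin n → ℂ)) h'
    simp only [AddSubmonoidClass.coe_finset_sum, SetLike.val_smul] at h''
    exact h''.symm
  have hMfac : ∀ x y, M x y = ∑ k, L x k * A k y := by
    intro x y
    show star (u x) ⬝ᵥ (N *ᵥ u y) = _
    rw [husum y]
    have h1 : N *ᵥ (∑ k, A k y • ((b k : Fin n → ℂ)))
        = ∑ k, A k y • (N *ᵥ (b k : Fin n → ℂ)) := by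
      rw [← Matrix.mulVecLin_apply, map_sum]
      simp [Matrix.mulVecLin_apply]
    rw [h1, dot_sum_smul]
    exact Finset.sum_congr rfl fun k _ => by rw [hL]; simp [mul_comm]
  have hMLA : M = L * A := by
    ext x y
    rw [Matrix.mul_apply]
    exact hMfac x y
  -- Hadamard square factorization through symmetric pairs
  let τ := {p' : Fin d × Fin d // p'.1 ≤ p'.2}
  set L2 : Matrix (Fin n) τ ℂ :=
    Matrix.of (fun x t => L x t.1.1 * L x t.1.2) with hL2
  set A2 : Matrix τ (Fin n) ℂ :=
    Matrix.of (fun t y => (if t.1.1 = t.1.2 then 1 else 2) * (A t.1.1 y * A t.1.2 y)) with hA2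
  set K : Matrix (Fin n) (Fin n) ℂ := Matrix.of (fun x y => (M x y)^2) with hK
  have hKfac : K = L2 * A2 := by
    ext x y
    rw [Matrix.mul_apply]
    show (M x y)^2 = _
    rw [hMfac x y, pow_two, Finset.sum_mul_sum]
    rw [sum_sym_pairs (fun k l => (L x k * A k y) * (L x l * A l y))
      (fun k l => by ring)]
    exact Finset.sum_congr rfl fun t _ => by simp [hL2, hA2]; ring
  set c : ℂ := (lam:ℂ)^2 + lam with hc
  have hcne : c ≠ 0 := by
    intro hcc
    have h' : (lam:ℂ) * ((lam:ℂ) + 1) = 0 := by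
      rw [hc] at hcc; linear_combination hcc
    rcases mul_eq_zero.1 h' with h | h
    · exact h0 (by exact_mod_cast h)
    · apply h1
      have : (lam:ℂ) = -1 := by linear_combination h
      exact_mod_cast this
  have hid : c • (1 : Matrix (Fin n) (Fin n) ℂ) = K - Mᵀ := by
    ext x y
    simp only [Matrix.smul_apply, Matrix.sub_apply, Matrix.transpose_apply,
      Matrix.one_apply, hK, Matrix.of_apply, smul_eq_mul]
    rw [hMsq x y, hc]
    ring
  -- rank chase
  have hrank1 : ((1 : Matrix (Fin n) (Fin n) ℂ)).rank = n := by
    rw [Matrix.rank_one, Fintype.card_fin]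
  have h1eq : (1 : Matrix (Fin n) (Fin n) ℂ)
      = (c⁻¹ • (1 : Matrix (Fin n) (Fin n) ℂ)) * (K - Mᵀ) := by
    rw [Matrix.smul_mul, Matrix.one_mul, ← hid, smul_smul, inv_mul_cancel₀ hcne, one_smul]
  have hn_le : n ≤ (K - Mᵀ).rank := by
    have h2 := Matrix.rank_mul_le_right (c⁻¹ • (1 : Matrix (Fin n) (Fin n) ℂ)) (K - Mᵀ)
    rw [← h1eq, hrank1] at h2
    exact h2
  have hKrank : K.rank ≤ Fintype.card τ := by
    rw [hKfac]
    exact le_trans (Matrix.rank_mul_le_right _ _) (Matrix.rank_le_card_height _)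
  have hMtrank : (Mᵀ).rank ≤ d := by
    rw [hMLA, Matrix.transpose_mul]
    refine le_trans (Matrix.rank_mul_le_left _ _) ?_
    exact le_trans (Matrix.rank_le_card_width _) (by simp)
  have hcardτ : Fintype.card τ = (d+1).choose 2 := by
    rw [← Fintype.card_congr (Sym2.sortEquiv (α := Fin d)), Sym2.card, Fintype.card_fin]
  have hfinal : n ≤ (d+1).choose 2 + d := by
    calc n ≤ (K - Mᵀ).rank := hn_le
    _ ≤ K.rank + (Mᵀ).rank := rank_sub_le' _ _
    _ ≤ Fintype.card τ + d := add_le_add hKrank hMtrank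
    _ = (d+1).choose 2 + d := by rw [hcardτ]
  rw [Nat.choose_two_right] at hfinal
  obtain ⟨k, hk⟩ := Nat.even_mul_succ_self d
  have hcomm : (d+1) * ((d+1) - 1) = d * (d+1) := by
    simp [Nat.mul_comm]
  have h5 : d * (d + 5) = d * (d + 1) + 4 * d := by ring
  rw [hcomm, hk] at hfinal
  rw [h5, hk]
  omega
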